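/- Let b > 0, λ, μ ∈ ℝ with Δ := λ² - 4μ > 0, and define c = λ²b/2 - 2bμ and u(x,t) = (1/2)√(6b)·√Δ · tanh((√Δ/2)(x + ct)). Then u satisfies the modified KdV equation u_t - u² u_x + b u_{xxx} = 0. -/

import Mathlib

lemma tanh_hasDerivAt' (y : ℝ) : HasDerivAt Real.tanh (1 - Real.tanh y ^ 2) y := by
  have hc : Real.cosh y ≠ 0 := (Real.cosh_pos y).ne'
  have h := (Real.hasDerivAt_sinh y).div (Real.hasDerivAt_cosh y) hc
  have heq : (Real.cosh y * Real.cosh y - Real.sinh y * Real.sinh y) / (Real.cosh y)^2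
      = 1 - Real.tanh y ^ 2 := by
    rw [Real.tanh_eq_sinh_div_cosh]
    field_simp
  rw [heq] at h
  exact h.congr_of_eventuallyEq
    (Filter.Eventually.of_forall fun z => by rw [Real.tanh_eq_sinh_div_cosh]; rfl)

lemma tanh_affine_hasDerivAt (m d y : ℝ) :
    HasDerivAt (fun w : ℝ => Real.tanh (m * w + d))
      ((1 - Real.tanh (m * y + d) ^ 2) * (m * 1)) y := by
  have hin : HasDerivAt (fun w : ℝ => m * w + d) (m * 1) y :=
    ((hasDerivAt_id y).const_mul m).add_const d
  exact (tanh_hasDerivAt' (m * y + d)).comp y hin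

set_option maxHeartbeats 1000000 in
theorem stmt11 (b lam mu c : ℝ) (hb : b > 0) (hd : lam ^ 2 - 4 * mu > 0)
    (hc : c = lam ^ 2 * b / 2 - 2 * b * mu)
    (u : ℝ → ℝ → ℝ)
    (hu : ∀ x t : ℝ, u x t = 1 / 2 * Real.sqrt (6 * b) * Real.sqrt (lam ^ 2 - 4 * mu) *
      Real.tanh (Real.sqrt (lam ^ 2 - 4 * mu) / 2 * (x + c * t))) :
    ∀ x t : ℝ,
      deriv (fun s => u x s) t - (u x t) ^ 2 * deriv (fun y => u y t) x +
        b * deriv (fun y => deriv (fun z => deriv (fun w => u w t) z) y) x = 0 := by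
  intro x t
  set A : ℝ := 1 / 2 * Real.sqrt (6 * b) * Real.sqrt (lam ^ 2 - 4 * mu) with hA
  set k : ℝ := Real.sqrt (lam ^ 2 - 4 * mu) / 2 with hk
  set e : ℝ := k * c * t with he
  -- spatial profile
  have hfun : (fun w => u w t) = (fun w => A * Real.tanh (k * w + e)) := by
    funext w
    rw [hu]
    congr 2
    simp only [he, hk]
    ring
  -- time profile
  have hfunt : (fun s => u x s) = (fun s => A * Real.tanh ((k * c) * s + k * x)) := by
    funext s
    rw [hu]
    congr 2
    simp only [hk]
    ring
  -- first spatial derivative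
  have hT : ∀ y : ℝ, HasDerivAt (fun w : ℝ => Real.tanh (k * w + e))
      ((1 - Real.tanh (k * y + e) ^ 2) * (k * 1)) y := fun y => tanh_affine_hasDerivAt k e y
  have hd1 : (fun z => deriv (fun w => u w t) z)
      = (fun z => A * ((1 - Real.tanh (k * z + e) ^ 2) * (k * 1))) := by
    funext z
    rw [hfun]
    exact ((hT z).const_mul A).deriv
  -- second spatial derivative
  have hg1 : ∀ y : ℝ, HasDerivAt (fun z => A * ((1 - Real.tanh (k * z + e) ^ 2) * (k * 1)))
      (A * ((0 - (2: ℕ) * Real.tanh (k * y + e) ^ (2 - 1) *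
        ((1 - Real.tanh (k * y + e) ^ 2) * (k * 1))) * (k * 1))) y := fun y =>
    (((hasDerivAt_const y (1 : ℝ)).sub ((hT y).pow 2)).mul_const (k * 1)).const_mul A
  have hd2 : (fun y => deriv (fun z => deriv (fun w => u w t) z) y)
      = (fun y => A * k ^ 2 * (-2) * (Real.tanh (k * y + e) - Real.tanh (k * y + e) ^ 3)) := by
    funext y
    rw [hd1]
    rw [(hg1 y).deriv]
    push_cast
    ring
  -- third spatial derivative
  have hg2 : HasDerivAt
      (fun y => A * k ^ 2 * (-2) * (Real.tanh (k * y + e) - Real.tanh (k * y + e) ^ 3))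
      (A * k ^ 2 * (-2) * (((1 - Real.tanh (k * x + e) ^ 2) * (k * 1)) -
        (3 : ℕ) * Real.tanh (k * x + e) ^ (3 - 1) *
          ((1 - Real.tanh (k * x + e) ^ 2) * (k * 1)))) x :=
    ((hT x).sub ((hT x).pow 3)).const_mul (A * k ^ 2 * (-2))
  -- time derivative
  have hTt : HasDerivAt (fun s : ℝ => A * Real.tanh ((k * c) * s + k * x))
      (A * ((1 - Real.tanh ((k * c) * t + k * x) ^ 2) * ((k * c) * 1))) t :=
    (tanh_affine_hasDerivAt (k * c) (k * x) t).const_mul A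
  have hdt : deriv (fun s => u x s) t
      = A * ((1 - Real.tanh ((k * c) * t + k * x) ^ 2) * ((k * c) * 1)) := by
    rw [hfunt]; exact hTt.deriv
  have hdx : deriv (fun y => u y t) x = A * ((1 - Real.tanh (k * x + e) ^ 2) * (k * 1)) := by
    have := congrFun hd1 x
    exact this
  have hd3 : deriv (fun y => deriv (fun z => deriv (fun w => u w t) z) y) x
      = A * k ^ 2 * (-2) * (((1 - Real.tanh (k * x + e) ^ 2) * (k * 1)) -
        (3 : ℕ) * Real.tanh (k * x + e) ^ (3 - 1) *
          ((1 - Real.tanh (k * x + e) ^ 2) * (k * 1))) := by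
    rw [hd2]; exact hg2.deriv
  -- unify tanh arguments
  have harg : (k * c) * t + k * x = k * x + e := by simp only [he]; ring
  rw [hdt, hdx, hd3, harg]
  have hux : u x t = A * Real.tanh (k * x + e) := by
    rw [hu]; congr 2; simp only [hk, he]; ring
  rw [hux]
  set T : ℝ := Real.tanh (k * x + e)
  have hA2 : A ^ 2 = 3 * b * (lam ^ 2 - 4 * mu) / 2 := by
    rw [hA]
    have h1 : Real.sqrt (6 * b) ^ 2 = 6 * b := Real.sq_sqrt (by linarith)
    have h2 : Real.sqrt (lam ^ 2 - 4 * mu) ^ 2 = lam ^ 2 - 4 * mu :=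
      Real.sq_sqrt (by linarith)
    nlinarith [h1, h2]
  have hk2 : k ^ 2 = (lam ^ 2 - 4 * mu) / 4 := by
    rw [hk]
    have h2 : Real.sqrt (lam ^ 2 - 4 * mu) ^ 2 = lam ^ 2 - 4 * mu :=
      Real.sq_sqrt (by linarith)
    nlinarith [h2]
  push_cast
  linear_combination (A * k * (1 - T ^ 2)) * hc - A * T ^ 2 * k * (1 - T ^ 2) * hA2
    + b * A * k * (6 * T ^ 2 - 2) * (1 - T ^ 2) * hk2
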